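/- Let (c(t))_{t∈ℝ} be a bounded complex cosine function that is discontinuous. Then for every α ∈ [−1, 1] there exists a sequence (t_n) of positive reals with t_n → 0 and c(t_n) → α. -/

import Mathlib

open Filter

namespace Stmt10Aux
open Real Set


noncomputable def fold (x : ℝ) : ℝ := Real.arccos (Real.cos x)

lemma fold_nonneg (x : ℝ) : 0 ≤ fold x := Real.arccos_nonneg _

lemma fold_le_pi (x : ℝ) : fold x ≤ π := Real.arccos_le_pi _

lemma cos_fold (x : ℝ) : Real.cos (fold x) = Real.cos x :=
  Real.cos_arccos (Real.neg_one_le_cos x) (Real.cos_le_one x)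

lemma fold_eq_self {x : ℝ} (h0 : 0 ≤ x) (h1 : x ≤ π) : fold x = x := Real.arccos_cos h0 h1

lemma continuous_fold : Continuous fold := Real.continuous_arccos.comp Real.continuous_cos

lemma fold_neg (x : ℝ) : fold (-x) = fold x := by simp [fold]

lemma fold_zero : fold 0 = 0 := by simp [fold]

lemma fold_abs (x : ℝ) : fold |x| = fold x := by
  rcases abs_cases x with ⟨h1, _⟩ | ⟨h1, _⟩
  · rw [h1]
  · rw [h1, fold_neg]

lemma fold_le_abs (x : ℝ) : fold x ≤ |x| := by
  rcases le_or_gt |x| π with h | h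
  · rw [← fold_abs x]
    exact (fold_eq_self (abs_nonneg x) h).le
  · exact (fold_le_pi x).trans h.le

lemma fold_add_int (x : ℝ) (k : ℤ) : fold (x + k * (2 * π)) = fold x := by
  unfold fold; rw [Real.cos_add_int_mul_two_pi]

lemma fold_le_sub_int (x : ℝ) (k : ℤ) : fold x ≤ |x - k * (2 * π)| := by
  have h := fold_le_abs (x - k * (2 * π))
  have h2 : fold x = fold (x - k * (2 * π)) := by
    have := fold_add_int (x - k * (2 * π)) k
    rw [sub_add_cancel] at this
    exact this
  rw [h2]; exact h

lemma fold_eq_zero_iff {x : ℝ} : fold x = 0 ↔ Real.cos x = 1 := by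
  constructor
  · intro h
    have := cos_fold x
    rw [h] at this
    simpa using this.symm
  · intro h
    unfold fold
    rw [h, Real.arccos_one]

lemma fold_of_pi_le {x : ℝ} (h1 : π ≤ x) (h2 : x ≤ 2 * π) : fold x = 2 * π - x := by
  have h3 : fold (2 * π - x) = 2 * π - x := fold_eq_self (by linarith) (by linarith)
  rw [← h3]
  unfold fold
  congr 1
  rw [show (2*π - x) = -x + (1:ℤ) * (2*π) by push_cast; ring]
  rw [Real.cos_add_int_mul_two_pi, Real.cos_neg]

lemma arccos_antitone {x y : ℝ} (h : x ≤ y) : Real.arccos y ≤ Real.arccos x := by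
  have := Real.monotone_arcsin h
  simp only [Real.arccos]
  linarith

-- pigeonhole: small multiple
lemma exists_small_multiple (θ : ℝ) (N : ℕ) (hN : 0 < N) :
    ∃ d : ℕ, 1 ≤ d ∧ d ≤ N ∧ fold (d * θ) ≤ 2 * π / N := by
  have hπ := Real.pi_pos
  have hN' : (0:ℝ) < N := by exact_mod_cast hN
  set p : ℕ → ℝ := fun j => Int.fract (j * θ / (2 * π)) with hp
  have hp0 : ∀ j, 0 ≤ p j := fun j => Int.fract_nonneg _
  have hp1 : ∀ j, p j < 1 := fun j => Int.fract_lt_one _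
  have key : ∀ i j : ℕ, i < j → j ≤ N → ⌊p i * N⌋₊ = ⌊p j * N⌋₊ →
      ∃ d : ℕ, 1 ≤ d ∧ d ≤ N ∧ fold (d * θ) ≤ 2 * π / N := by
    intro i j hlt hjN hfl
    refine ⟨j - i, by omega, by omega, ?_⟩
    have hdij : ((j - i : ℕ) : ℝ) = (j:ℝ) - i := by
      push_cast [Nat.cast_sub hlt.le]; ring
    -- |p j - p i| < 1/N
    have habs : |p j - p i| ≤ 1 / N := by
      have A1 : (⌊p i * N⌋₊ : ℝ) ≤ p i * N := Nat.floor_le (mul_nonneg (hp0 i) hN'.le)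
      have A2 : p i * N < ⌊p i * N⌋₊ + 1 := Nat.lt_floor_add_one _
      have B1 : (⌊p j * N⌋₊ : ℝ) ≤ p j * N := Nat.floor_le (mul_nonneg (hp0 j) hN'.le)
      have B2 : p j * N < ⌊p j * N⌋₊ + 1 := Nat.lt_floor_add_one _
      rw [hfl] at A1 A2
      rw [abs_sub_le_iff]
      constructor
      · rw [le_div_iff₀ hN']
        nlinarith
      · rw [le_div_iff₀ hN']
        nlinarith
    -- d θ - k (2π) = (p j - p i) * 2π
    set k : ℤ := ⌊(j:ℝ) * θ / (2 * π)⌋ - ⌊(i:ℝ) * θ / (2 * π)⌋ with hk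
    have hfr : ∀ m : ℕ, (m:ℝ) * θ = (⌊(m:ℝ) * θ / (2*π)⌋ + p m) * (2*π) := by
      intro m
      have : (⌊(m:ℝ) * θ / (2*π)⌋ : ℝ) + p m = (m:ℝ) * θ / (2*π) := Int.floor_add_fract _
      field_simp [this]
      rw [this]; field_simp
    have e : ((j - i : ℕ):ℝ) * θ - (k:ℝ) * (2 * π) = (p j - p i) * (2 * π) := by
      rw [hdij, hk]
      have h1 := hfr j
      have h2 := hfr i
      push_cast
      linear_combination h1 - h2
    have := fold_le_sub_int (((j - i : ℕ):ℝ) * θ) k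
    rw [e] at this
    calc fold (((j-i:ℕ):ℝ) * θ) ≤ |(p j - p i) * (2*π)| := this
      _ = |p j - p i| * (2*π) := by rw [abs_mul]; congr 1; exact abs_of_pos (by linarith)
      _ ≤ (1/N) * (2*π) := mul_le_mul_of_nonneg_right habs (by linarith)
      _ = 2 * π / N := by ring
  have maps : ∀ j ∈ Finset.range (N + 1), (⌊p j * N⌋₊) ∈ Finset.range N := by
    intro j _
    rw [Finset.mem_range]
    have hlt : p j * N < N := by nlinarith [hp1 j, hp0 j]
    have : p j * N < ((N:ℕ):ℝ) := by exact_mod_cast hlt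
    exact (Nat.floor_lt (mul_nonneg (hp0 j) hN'.le)).mpr this
  obtain ⟨i, hi, j, hj, hij, heq⟩ :=
    Finset.exists_ne_map_eq_of_card_lt_of_maps_to (by simp) maps
  rw [Finset.mem_range] at hi hj
  rcases Ne.lt_or_gt hij with hlt | hlt
  · exact key i j hlt (by omega) heq
  · exact key j i hlt (by omega) heq.symm


lemma fold_eq (x : ℝ) : fold x = Real.arccos (Real.cos x) := rfl


theorem dense_theta (Θ : Set ℝ) (hsub : Θ ⊆ Icc 0 π)
    (hmul : ∀ θ ∈ Θ, ∀ n : ℕ, 1 ≤ n → fold (n * θ) ∈ Θ)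
    (hdiv : ∀ θ ∈ Θ, ∀ q : ℕ, 1 ≤ q → ∃ φ ∈ Θ, fold (q * φ) = θ)
    (hpos : ∃ θ ∈ Θ, 0 < θ) :
    ∀ β ∈ Icc (0:ℝ) π, ∀ ε > (0:ℝ), ∃ θ ∈ Θ, |θ - β| ≤ 2 * ε := by
  have hπ := Real.pi_pos
  intro β hβ ε hε
  obtain ⟨θs, hθsΘ, hθs⟩ := hpos
  -- wlog ε ≤ π
  rcases le_or_gt ε π with hεπ | hεπ
  swap
  · refine ⟨θs, hθsΘ, ?_⟩
    obtain ⟨h1, h2⟩ := hsub hθsΘ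
    rw [abs_le]
    constructor <;> nlinarith [hβ.1, hβ.2]
  -- Step 1: find small positive element of Θ
  have step1 : ∃ φ ∈ Θ, 0 < φ ∧ φ ≤ ε := by
    by_contra hnone
    push_neg at hnone
    -- every element of Θ that is ≤ ε is 0
    have hzero : ∀ θ ∈ Θ, θ ≤ ε → θ = 0 := by
      intro θ hθ hle
      rcases eq_or_lt_of_le (hsub hθ).1 with h | h
      · exact h.symm
      · exact absurd hle (not_le.mpr (hnone θ hθ h))
    set N : ℕ := ⌈2 * π / ε⌉₊ with hN
    have hNpos : 0 < N := Nat.ceil_pos.mpr (by positivity)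
    have hNge : 2 * π / (N:ℝ) ≤ ε := by
      rw [div_le_iff₀ (by exact_mod_cast hNpos)]
      have := Nat.le_ceil (2 * π / ε)
      rw [← hN] at this
      calc 2*π = (2*π/ε) * ε := by field_simp
        _ ≤ (N:ℝ) * ε := mul_le_mul_of_nonneg_right this hε.le
        _ = ε * N := by ring
    -- every element of Θ is annihilated by D = N!
    set D : ℕ := Nat.factorial N with hD
    have hDpos : 1 ≤ D := Nat.one_le_iff_ne_zero.mpr (Nat.factorial_ne_zero N)
    have hann : ∀ θ ∈ Θ, fold (D * θ) = 0 := by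
      intro θ hθ
      obtain ⟨d, hd1, hdN, hsmall⟩ := exists_small_multiple θ N hNpos
      have hmem : fold (d * θ) ∈ Θ := hmul θ hθ d hd1
      have : fold (d * θ) = 0 := hzero _ hmem (hsmall.trans hNge)
      -- d * θ = 2π * m
      rw [fold_eq_zero_iff] at this
      rw [Real.cos_eq_one_iff] at this
      obtain ⟨m, hm⟩ := this
      -- D = d * e
      obtain ⟨e, he⟩ := Nat.dvd_factorial (by omega) hdN
      rw [fold_eq_zero_iff, Real.cos_eq_one_iff]
      have he2 : (D:ℝ) = (d:ℝ) * (e:ℝ) := by exact_mod_cast congrArg Nat.cast he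
      exact ⟨m * e, by push_cast; linear_combination (e:ℝ) * hm - θ * he2⟩
    obtain ⟨φ, hφΘ, hφ⟩ := hdiv θs hθsΘ D hDpos
    rw [hann φ hφΘ] at hφ
    exact absurd hφ.symm (ne_of_gt hθs)
  -- Step 2: multiples of small φ approximate β
  obtain ⟨φ, hφΘ, hφ0, hφε⟩ := step1
  have hφπ : φ ≤ π := (hsub hφΘ).2
  obtain ⟨hβ0, hβπ⟩ := hβ
  rcases le_or_gt β φ with hc | hc
  · refine ⟨φ, hφΘ, ?_⟩
    rw [abs_le]; constructor <;> nlinarith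
  · set n : ℕ := ⌈β / φ⌉₊ with hn
    have hn1 : 1 ≤ n := Nat.ceil_pos.mpr (div_pos (by linarith) hφ0)
    have hup : (n:ℝ) * φ < β + φ := by
      have := Nat.ceil_lt_add_one (le_of_lt (div_pos (by linarith) hφ0))
      rw [← hn] at this
      calc (n:ℝ) * φ < (β/φ + 1) * φ := by nlinarith
        _ = β + φ := by field_simp
    have hlow : β ≤ (n:ℝ) * φ := by
      have := Nat.le_ceil (β / φ)
      rw [← hn] at this
      calc β = (β/φ) * φ := by field_simp
        _ ≤ (n:ℝ) * φ := by nlinarith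
    refine ⟨fold (n * φ), hmul φ hφΘ n hn1, ?_⟩
    rcases le_or_gt ((n:ℝ) * φ) π with hcase | hcase
    · rw [fold_eq_self (by positivity) hcase]
      rw [abs_le]; constructor <;> nlinarith
    · have h2π : (n:ℝ) * φ ≤ 2 * π := by nlinarith
      rw [fold_of_pi_le hcase.le h2π]
      rw [abs_le]; constructor <;> nlinarith


lemma abs_sin_le_abs (t : ℝ) : |Real.sin t| ≤ |t| := by
  have key : ∀ s : ℝ, 0 ≤ s → |Real.sin s| ≤ s := by
    intro s hs
    rcases le_or_gt 0 (Real.sin s) with h | h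
    · rw [abs_of_nonneg h]; exact Real.sin_le hs
    · rw [abs_of_neg h]
      have hsπ : π < s := by
        by_contra hc
        push_neg at hc
        exact absurd (Real.sin_nonneg_of_nonneg_of_le_pi hs hc) (not_le.mpr h)
      have := Real.neg_one_le_sin s
      have := Real.pi_gt_three
      linarith
  rcases le_or_gt 0 t with h | h
  · rw [abs_of_nonneg h]; exact key t h
  · rw [abs_of_neg h]
    have := key (-t) (by linarith)
    rwa [Real.sin_neg, abs_neg] at this

lemma abs_cos_sub_cos_le (x y : ℝ) : |Real.cos x - Real.cos y| ≤ |x - y| := by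
  rw [Real.cos_sub_cos]
  have h1 := abs_sin_le_abs ((x - y)/2)
  have hA : |Real.sin ((x+y)/2)| ≤ 1 :=
    abs_le.mpr ⟨Real.neg_one_le_sin _, Real.sin_le_one _⟩
  have e1 : |(-2) * Real.sin ((x+y)/2) * Real.sin ((x-y)/2)|
      = 2 * |Real.sin ((x+y)/2)| * |Real.sin ((x-y)/2)| := by
    rw [abs_mul, abs_mul, abs_neg]
    norm_num
  rw [e1]
  have e2 : |(x - y)/2| = |x - y|/2 := by
    rw [abs_div]
    norm_num
  rw [e2] at h1
  nlinarith [abs_nonneg (Real.sin ((x-y)/2)), abs_nonneg (x - y), abs_nonneg (Real.sin ((x+y)/2))]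

section Freal

variable (F : ℝ → ℝ)

noncomputable def gg (t : ℝ) : ℝ := Real.arccos (F t)

variable (hF0 : F 0 = 1) (hFeq : ∀ s t, F (s + t) + F (s - t) = 2 * F s * F t)
  (hF1 : ∀ t, |F t| ≤ 1)

lemma gg_mem (t : ℝ) : gg F t ∈ Icc (0:ℝ) π := ⟨Real.arccos_nonneg _, Real.arccos_le_pi _⟩

include hF1 in
lemma F_eq_cos (t : ℝ) : F t = Real.cos (gg F t) := by
  have := abs_le.mp (hF1 t)
  exact (Real.cos_arccos this.1 this.2).symm

include hF0 hFeq hF1 in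
lemma F_nat : ∀ (n : ℕ) (t : ℝ), F (n * t) = Real.cos (n * gg F t) := by
  have key : ∀ (n : ℕ) (t : ℝ), F (n * t) = Real.cos (n * gg F t) ∧
      F ((n+1) * t) = Real.cos ((n+1) * gg F t) := by
    intro n t
    induction n with
    | zero =>
      constructor
      · simpa using hF0
      · push_cast
        simpa using (F_eq_cos F hF1 t)
    | succ n ih =>
      have hfst : F (↑(n+1) * t) = Real.cos (↑(n+1) * gg F t) := by
        push_cast
        push_cast at ih
        exact ih.2
      refine ⟨hfst, ?_⟩
      have heq := hFeq (((n:ℝ)+1) * t) t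
      have e1 : ((n:ℝ)+1) * t + t = ((n:ℝ)+1+1) * t := by ring
      have e2 : ((n:ℝ)+1) * t - t = (n:ℝ) * t := by ring
      rw [e1, e2] at heq
      have ih1 := ih.1
      have ih2 := ih.2
      set x := gg F t
      have hcos : Real.cos (((n:ℝ)+1+1) * x) + Real.cos ((n:ℝ) * x)
          = 2 * Real.cos (((n:ℝ)+1) * x) * Real.cos x := by
        have a1 : ((n:ℝ)+1+1) * x = ((n:ℝ)+1) * x + x := by ring
        have a2 : ((n:ℝ)) * x = ((n:ℝ)+1) * x - x := by ring
        rw [a1, a2, Real.cos_add, Real.cos_sub]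
        ring
      have hF' : F t = Real.cos x := F_eq_cos F hF1 t
      push_cast at heq ih1 ih2 ⊢
      rw [ih1, ih2, hF'] at heq
      linarith [hcos]
  exact fun n t => (key n t).1

include hF0 hFeq hF1 in
lemma gg_nat (n : ℕ) (t : ℝ) : gg F (n * t) = fold (n * gg F t) := by
  rw [fold_eq]
  unfold gg
  rw [F_nat F hF0 hFeq hF1 n t]
  rfl

-- the cluster set
def Theta : Set ℝ :=
  {θ : ℝ | ∃ u : ℕ → ℝ, (∀ k, 0 < u k) ∧ Tendsto u atTop (nhds 0) ∧
    Tendsto (fun k => gg F (u k)) atTop (nhds θ)}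

lemma Theta_sub : Theta F ⊆ Icc 0 π := by
  rintro θ ⟨u, hu, hu0, hg⟩
  constructor
  · exact ge_of_tendsto hg (Eventually.of_forall fun k => (gg_mem F (u k)).1)
  · exact le_of_tendsto hg (Eventually.of_forall fun k => (gg_mem F (u k)).2)

include hF0 hFeq hF1 in
lemma Theta_mul : ∀ θ ∈ Theta F, ∀ n : ℕ, 1 ≤ n → fold (n * θ) ∈ Theta F := by
  rintro θ ⟨u, hu, hu0, hg⟩ n hn
  refine ⟨fun k => n * u k, ?_, ?_, ?_⟩
  · intro k
    have : (0:ℝ) < n := by exact_mod_cast hn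
    exact mul_pos this (hu k)
  · have := hu0.const_mul (n:ℝ)
    simpa using this
  · have h1 : (fun k => gg F ((n:ℝ) * u k)) = fun k => fold ((n:ℝ) * gg F (u k)) := by
      funext k; exact gg_nat F hF0 hFeq hF1 n (u k)
    rw [h1]
    have h2 : Tendsto (fun k => (n:ℝ) * gg F (u k)) atTop (nhds ((n:ℝ) * θ)) :=
      hg.const_mul _
    exact (continuous_fold.tendsto _).comp h2

include hF0 hFeq hF1 in
lemma Theta_div : ∀ θ ∈ Theta F, ∀ q : ℕ, 1 ≤ q → ∃ φ ∈ Theta F, fold (q * φ) = θ := by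
  rintro θ ⟨u, hu, hu0, hg⟩ q hq
  have hq' : (0:ℝ) < q := by exact_mod_cast hq
  set v : ℕ → ℝ := fun k => u k / q with hv
  have hva : ∀ k, gg F (v k) ∈ Icc (0:ℝ) π := fun k => gg_mem F (v k)
  obtain ⟨φ, hφIcc, ψ, hψ, hψt⟩ := isCompact_Icc.tendsto_subseq hva
  have hvψ : Tendsto (fun k => v (ψ k)) atTop (nhds 0) := by
    have h0 : Tendsto v atTop (nhds 0) := by
      have := hu0.div_const (q:ℝ)
      simpa using this
    exact h0.comp hψ.tendsto_atTop
  refine ⟨φ, ⟨fun k => v (ψ k), fun k => div_pos (hu (ψ k)) hq', hvψ, hψt⟩, ?_⟩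
  -- fold (q φ) = θ
  have key : ∀ k, gg F (u (ψ k)) = fold ((q:ℝ) * gg F (v (ψ k))) := by
    intro k
    have : (q:ℝ) * v (ψ k) = u (ψ k) := by
      rw [hv]; field_simp
    rw [← this]
    exact gg_nat F hF0 hFeq hF1 q (v (ψ k))
  have t1 : Tendsto (fun k => gg F (u (ψ k))) atTop (nhds θ) :=
    hg.comp hψ.tendsto_atTop
  have t2 : Tendsto (fun k => fold ((q:ℝ) * gg F (v (ψ k)))) atTop (nhds (fold ((q:ℝ) * φ))) :=
    (continuous_fold.tendsto _).comp (hψt.const_mul _)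
  rw [show (fun k => gg F (u (ψ k))) = fun k => fold ((q:ℝ) * gg F (v (ψ k))) from funext key] at t1
  exact (tendsto_nhds_unique t2 t1)

set_option linter.unusedSectionVars false in
lemma Theta_pos (ε₀ : ℝ) (hε₀ : 0 < ε₀)
    (hd : ∀ δ > (0:ℝ), ∃ t, 0 < t ∧ t < δ ∧ F t ≤ 1 - ε₀) :
    ∃ θ ∈ Theta F, 0 < θ := by
  have hsel : ∀ k : ℕ, ∃ t, 0 < t ∧ t < 1/((k:ℝ)+1) ∧ F t ≤ 1 - ε₀ := by
    intro k
    exact hd _ (by positivity)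
  choose u hu1 hu2 hu3 using hsel
  have hva : ∀ k, gg F (u k) ∈ Icc (0:ℝ) π := fun k => gg_mem F (u k)
  obtain ⟨θ, hθIcc, ψ, hψ, hψt⟩ := isCompact_Icc.tendsto_subseq hva
  have huψ : Tendsto (fun k => u (ψ k)) atTop (nhds 0) := by
    refine squeeze_zero (fun k => (hu1 (ψ k)).le) (fun k => ?_)
      tendsto_one_div_add_atTop_nhds_zero_nat
    have h1 : u (ψ k) < 1/((ψ k : ℝ)+1) := hu2 (ψ k)
    have h2 : (1:ℝ)/((ψ k:ℝ)+1) ≤ 1/((k:ℝ)+1) := by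
      apply one_div_le_one_div_of_le (by positivity)
      have h4 := hψ.le_apply (x := k)
      have h5 : ((k:ℝ)) ≤ ((ψ k : ℕ) : ℝ) := by exact_mod_cast h4
      linarith
    linarith
  refine ⟨θ, ⟨fun k => u (ψ k), fun k => hu1 (ψ k), huψ, hψt⟩, ?_⟩
  have hlow : ∀ k, Real.arccos (1 - ε₀) ≤ gg F (u (ψ k)) := by
    intro k
    exact arccos_antitone (hu3 (ψ k))
  have : Real.arccos (1 - ε₀) ≤ θ := ge_of_tendsto hψt (Eventually.of_forall hlow)
  have hpos : 0 < Real.arccos (1 - ε₀) := Real.arccos_pos.mpr (by linarith)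
  linarith

include hF0 hFeq hF1 in
theorem F_dense (ε₀ : ℝ) (hε₀ : 0 < ε₀)
    (hd : ∀ δ > (0:ℝ), ∃ t, 0 < t ∧ t < δ ∧ F t ≤ 1 - ε₀) :
    ∀ β ∈ Icc (0:ℝ) π, ∀ δ > (0:ℝ), ∀ ε > (0:ℝ),
      ∃ t, 0 < t ∧ t < δ ∧ |F t - Real.cos β| < ε := by
  intro β hβ δ hδ ε hε
  obtain ⟨θ, hθΘ, hθβ⟩ := dense_theta (Theta F) (Theta_sub F)
    (Theta_mul F hF0 hFeq hF1) (Theta_div F hF0 hFeq hF1)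
    (Theta_pos F ε₀ hε₀ hd) β hβ (ε/6) (by positivity)
  obtain ⟨u, hu, hu0, hg⟩ := hθΘ
  have h1 : ∀ᶠ k in atTop, u k < δ := hu0.eventually (gt_mem_nhds hδ)
  have h2 : ∀ᶠ k in atTop, |gg F (u k) - θ| < ε/6 := by
    have := hg.eventually (Metric.ball_mem_nhds θ (show (0:ℝ) < ε/6 by positivity))
    simpa [Real.dist_eq] using this
  obtain ⟨k, hk1, hk2⟩ := (h1.and h2).exists
  refine ⟨u k, hu k, hk1, ?_⟩
  have hFt : F (u k) = Real.cos (gg F (u k)) := F_eq_cos F hF1 (u k)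
  rw [hFt]
  calc |Real.cos (gg F (u k)) - Real.cos β| ≤ |gg F (u k) - β| := abs_cos_sub_cos_le _ _
    _ ≤ |gg F (u k) - θ| + |θ - β| := abs_sub_le _ _ _
    _ < ε/6 + 2 * (ε/6) := by
        apply add_lt_add_of_lt_of_le hk2 hθβ
    _ < ε := by linarith

end Freal


lemma real_of_bounded (c : ℝ → ℂ) (hc0 : c 0 = 1)
    (hc : ∀ s t : ℝ, c (s + t) + c (s - t) = 2 * c s * c t)
    (M : ℝ) (hM : ∀ t : ℝ, ‖c t‖ ≤ M) (t : ℝ) :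
    c t = ((c t).re : ℂ) ∧ |(c t).re| ≤ 1 := by
  have hdup : ∀ u : ℝ, c (2 * u) = 2 * c u ^ 2 - 1 := by
    intro u
    have h := hc u u
    rw [sub_self, hc0] at h
    have e : 2 * u = u + u := by ring
    rw [e]
    linear_combination h
  have aux : ∀ (v : ℂ), v ≠ 0 → ∀ (u : ℝ), c u = (v + v⁻¹)/2 →
      ∀ n : ℕ, c ((2:ℝ)^n * u) = (v^(2^n : ℕ) + (v^(2^n : ℕ))⁻¹)/2 := by
    intro v hv u hu n
    induction n with
    | zero => simpa using hu
    | succ n ih =>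
      have e : (2:ℝ)^(n+1) * u = 2 * ((2:ℝ)^n * u) := by ring
      rw [e, hdup, ih]
      have hV : v^(2^n : ℕ) ≠ 0 := pow_ne_zero _ hv
      have e2 : v^(2^(n+1) : ℕ) = (v^(2^n : ℕ))^2 := by
        rw [← pow_mul, pow_succ]
      rw [e2]
      field_simp
      ring
  obtain ⟨s, hs⟩ := IsAlgClosed.exists_pow_nat_eq ((c t)^2 - 1) (n := 2) (by norm_num)
  set w : ℂ := c t + s with hw
  have hw1 : w * (c t - s) = 1 := by rw [hw]; linear_combination -hs
  have hw0 : w ≠ 0 := left_ne_zero_of_mul_eq_one hw1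
  have hwinv : w⁻¹ = c t - s := inv_eq_of_mul_eq_one_right hw1
  have hsum : c t = (w + w⁻¹)/2 := by rw [hwinv, hw]; ring
  -- choose v with ‖v‖ ≥ 1
  obtain ⟨v, hv0, hv1, hvsum⟩ : ∃ v : ℂ, v ≠ 0 ∧ 1 ≤ ‖v‖ ∧ c t = (v + v⁻¹)/2 := by
    rcases le_or_gt 1 ‖w‖ with h | h
    · exact ⟨w, hw0, h, hsum⟩
    · refine ⟨w⁻¹, inv_ne_zero hw0, ?_, ?_⟩
      · rw [norm_inv]
        exact one_le_inv_iff₀.mpr ⟨norm_pos_iff.mpr hw0, h.le⟩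
      · rw [inv_inv, hsum]; ring
  have hbound : ∀ n : ℕ, ‖v‖^(2^n : ℕ) ≤ 2*M + 1 := by
    intro n
    have h := hM ((2:ℝ)^n * t)
    rw [aux v hv0 t hvsum n] at h
    set V := v^(2^n : ℕ) with hV
    have hVnorm : ‖V‖ = ‖v‖^(2^n : ℕ) := by rw [hV, norm_pow]
    have hV1 : 1 ≤ ‖V‖ := by rw [hVnorm]; exact one_le_pow₀ hv1
    have hVinv : ‖V⁻¹‖ ≤ 1 := by
      rw [norm_inv]
      exact inv_le_one_of_one_le₀ hV1
    have h2 : ‖V + V⁻¹‖ ≤ 2 * M := by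
      have : ‖(V + V⁻¹)/2‖ = ‖V + V⁻¹‖/2 := by
        rw [norm_div]
        norm_num
      rw [this] at h
      linarith
    have h3 : ‖V‖ ≤ ‖V + V⁻¹‖ + ‖V⁻¹‖ := by
      calc ‖V‖ = ‖(V + V⁻¹) - V⁻¹‖ := by ring_nf
        _ ≤ ‖V + V⁻¹‖ + ‖V⁻¹‖ := norm_sub_le _ _
    rw [← hVnorm]
    linarith
  have hnorm1 : ‖v‖ = 1 := by
    by_contra hne
    have hgt : 1 < ‖v‖ := lt_of_le_of_ne hv1 (Ne.symm hne)
    obtain ⟨n, hn⟩ := pow_unbounded_of_one_lt (2*M+1) hgt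
    have : ‖v‖^n ≤ ‖v‖^(2^n : ℕ) :=
      pow_le_pow_right₀ hv1 (Nat.lt_two_pow_self (n := n)).le
    have := hbound n
    linarith
  -- v⁻¹ = conj v
  have hconj : v⁻¹ = (starRingEnd ℂ) v := by
    have h1 : v * (starRingEnd ℂ) v = 1 := by
      rw [Complex.mul_conj]
      rw [Complex.normSq_eq_norm_sq, hnorm1]
      norm_num
    exact inv_eq_of_mul_eq_one_right h1
  have hre : c t = ((v.re : ℝ) : ℂ) := by
    rw [hvsum, hconj, Complex.add_conj]
    push_cast
    ring
  constructor
  · rw [hre]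
    simp
  · have : (c t).re = v.re := by rw [hre]; simp
    rw [this]
    have := Complex.abs_re_le_norm v
    rw [hnorm1] at this
    exact this

theorem stmt_10' (c : ℝ → ℂ) (hc0 : c 0 = 1)
    (hc : ∀ s t : ℝ, c (s + t) + c (s - t) = 2 * c s * c t)
    (hb : ∃ M : ℝ, ∀ t : ℝ, ‖c t‖ ≤ M)
    (hdisc : ¬ Continuous c) :
    ∀ α ∈ Set.Icc (-1 : ℝ) 1, ∃ t : ℕ → ℝ,
      (∀ n, 0 < t n) ∧ Tendsto t atTop (nhds 0) ∧
      Tendsto (fun n => c (t n)) atTop (nhds ((α : ℂ))) := by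
  obtain ⟨M, hM⟩ := hb
  set F : ℝ → ℝ := fun t => (c t).re with hF
  have hreal : ∀ t, c t = ((F t : ℝ) : ℂ) := fun t =>
    (real_of_bounded c hc0 hc M hM t).1
  have hF1 : ∀ t, |F t| ≤ 1 := fun t => (real_of_bounded c hc0 hc M hM t).2
  have hF0 : F 0 = 1 := by rw [hF]; simp [hc0]
  have hFeq : ∀ s t, F (s + t) + F (s - t) = 2 * F s * F t := by
    intro s t
    have h := hc s t
    rw [hreal (s+t), hreal (s-t), hreal s, hreal t] at h
    exact_mod_cast h
  -- discontinuity gives ε₀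
  have hd : ∃ ε₀ > (0:ℝ), ∀ δ > (0:ℝ), ∃ t, 0 < t ∧ t < δ ∧ F t ≤ 1 - ε₀ := by
    by_contra hcon
    push_neg at hcon
    -- show c continuous
    apply hdisc
    have hFeven : ∀ t, F (-t) = F t := by
      intro t
      have h := hFeq 0 t
      rw [zero_add, zero_sub, hF0] at h
      linarith
    have ident : ∀ x y : ℝ, (F y - F x)^2 = (1 - F (y - x)) * (1 - F (y + x)) := by
      intro x y
      have e1 := hFeq y x
      have e2 := hFeq (y+x) (y-x)
      have a1 : (y+x)+(y-x) = y+y := by ring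
      have a2 : (y+x)-(y-x) = x+x := by ring
      rw [a1, a2] at e2
      have e3 := hFeq y y
      rw [sub_self, hF0] at e3
      have e4 := hFeq x x
      rw [sub_self, hF0] at e4
      linear_combination e1 + (1/2) * e2 - (1/2) * e3 - (1/2) * e4
    have hFcont : Continuous F := by
      rw [continuous_iff_continuousAt]
      intro x
      rw [Metric.continuousAt_iff]
      intro ε hε
      obtain ⟨δ, hδ, hδ2⟩ := hcon (ε^2/2) (by positivity)
      refine ⟨δ, hδ, ?_⟩
      intro y hy
      rw [Real.dist_eq] at hy ⊢
      rcases eq_or_ne y x with rfl | hne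
      · simpa using hε
      · have habs : 0 < |y - x| := abs_pos.mpr (sub_ne_zero.mpr hne)
        have h1 : F (|y - x|) > 1 - ε^2/2 := by
          have := hδ2 |y-x| habs hy
          linarith
        have h2 : F (y - x) = F |y - x| := by
          rcases abs_cases (y - x) with ⟨h, _⟩ | ⟨h, _⟩
          · rw [h]
          · rw [h, hFeven]
        have h3 : (F y - F x)^2 < ε^2 := by
          have hid := ident x y
          have hb1 := abs_le.mp (hF1 (y + x))
          have hb2 := abs_le.mp (hF1 (y - x))
          nlinarith [h1, h2]
        exact abs_lt_of_sq_lt_sq h3 hε.le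
    have : c = fun t => ((F t : ℝ) : ℂ) := funext hreal
    rw [this]
    exact Complex.continuous_ofReal.comp hFcont
  obtain ⟨ε₀, hε₀, hdd⟩ := hd
  intro α hα
  set β := Real.arccos α with hβ
  have hβmem : β ∈ Icc (0:ℝ) π := ⟨Real.arccos_nonneg _, Real.arccos_le_pi _⟩
  have hcosβ : Real.cos β = α := Real.cos_arccos hα.1 hα.2
  have hsel : ∀ n : ℕ, ∃ t, 0 < t ∧ t < 1/((n:ℝ)+1) ∧ |F t - Real.cos β| < 1/((n:ℝ)+1) :=
    fun n => F_dense F hF0 hFeq hF1 ε₀ hε₀ hdd β hβmem _ (by positivity) _ (by positivity)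
  choose t ht1 ht2 ht3 using hsel
  refine ⟨t, ht1, ?_, ?_⟩
  · exact squeeze_zero (fun n => (ht1 n).le) (fun n => (ht2 n).le)
      tendsto_one_div_add_atTop_nhds_zero_nat
  · have hFt : Tendsto (fun n => F (t n)) atTop (nhds α) := by
      rw [tendsto_iff_dist_tendsto_zero]
      apply squeeze_zero (fun n => dist_nonneg) (fun n => ?_)
        tendsto_one_div_add_atTop_nhds_zero_nat
      rw [Real.dist_eq, ← hcosβ]
      exact (ht3 n).le
    have hcomp : Tendsto (fun n => ((F (t n) : ℝ) : ℂ)) atTop (nhds ((α : ℝ) : ℂ)) :=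
      (Complex.continuous_ofReal.tendsto α).comp hFt
    have : (fun n => c (t n)) = fun n => ((F (t n) : ℝ) : ℂ) :=
      funext fun n => hreal (t n)
    rw [this]
    exact hcomp


end Stmt10Aux

theorem stmt_10 (c : ℝ → ℂ) (hc0 : c 0 = 1)
    (hc : ∀ s t : ℝ, c (s + t) + c (s - t) = 2 * c s * c t)
    (hb : ∃ M : ℝ, ∀ t : ℝ, ‖c t‖ ≤ M)
    (hdisc : ¬ Continuous c) :
    ∀ α ∈ Set.Icc (-1 : ℝ) 1, ∃ t : ℕ → ℝ,
      (∀ n, 0 < t n) ∧ Tendsto t atTop (nhds 0) ∧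
      Tendsto (fun n => c (t n)) atTop (nhds ((α : ℂ))) :=
  Stmt10Aux.stmt_10' c hc0 hc hb hdisc
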